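/- arXiv:1206.0518 — 2 statements merged into one kernel-verified Lean document; each statement's English description precedes it below -/
import Mathlib

section
/- Let 𝕋 = ℝ/ℤ be the unit circle with the metric d(e^{2πix}, e^{2πiy}) = inf_{k∈ℤ} |x − y − k|, and for an integer m ≥ 2 let T_m : 𝕋 → 𝕋 be T_m(z) = z^m. Then for every subset C ⊆ 𝕋, the Hausdorff dimension of C equals h^B(T_m, C)/log m. -/
open Set Filter MeasureTheory
open scoped Classical ENNReal

noncomputable section

namespace Lowering

variable {X : Type*} [TopologicalSpace X]

/-- A finite open cover of the whole space. -/
def IsFinOpenCover (U : Finset (Set X)) : Prop :=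
  (∀ u ∈ U, IsOpen u) ∧ ⋃₀ (U : Set (Set X)) = Set.univ

/-- The dynamical refinement `⋁_{i=0}^{n-1} T⁻ⁱ U` of a family of subsets. -/
def dynRefine (T : X → X) (U : Set (Set X)) (n : ℕ) : Set (Set X) :=
  {V | ∃ f : ℕ → Set X, (∀ i < n, f i ∈ U) ∧ V = ⋂ i ∈ Finset.range n, T^[i] ⁻¹' f i}

/-- `N(V, K)`: the minimal cardinality of a finite subfamily of `V` covering `K`
(with the convention `N(V, ∅) = 1`). -/
def coverNum (V : Set (Set X)) (K : Set X) : ℕ :=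
  if K = ∅ then 1
  else sInf {n : ℕ | ∃ F : Finset (Set X), ↑F ⊆ V ∧ K ⊆ ⋃₀ (F : Set (Set X)) ∧ F.card = n}

/-- `h_U(T, K) = limsup_n (1/n) log N(⋁_{i=0}^{n-1} T⁻ⁱU, K)`. -/
def coverEntropyOf (T : X → X) (U : Finset (Set X)) (K : Set X) : EReal :=
  Filter.atTop.limsup fun n : ℕ =>
    ((Real.log (coverNum (dynRefine T (↑U) n) K) / n : ℝ) : EReal)

/-- The covering entropy `h(T, K)` of a subset `K`. -/
def coverEntropy (T : X → X) (K : Set X) : EReal :=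
  ⨆ (U : Finset (Set X)) (_ : IsFinOpenCover U), coverEntropyOf T U K

/-- `n_{T,U}(E)`: the largest `j` (possibly `∞`) such that `Tⁱ E` is contained in some member
of `U` for all `0 ≤ i ≤ j - 1`. -/
def bowenN (T : X → X) (U : Finset (Set X)) (E : Set X) : ℕ∞ :=
  ⨆ j ∈ {j : ℕ | ∀ i < j, ∃ u ∈ U, T^[i] '' E ⊆ u}, (j : ℕ∞)

/-- The weight `exp (-λ n)`, with the conventions `0 ⬝ ∞ = 0`. -/
def expWeight (lam : ℝ) (n : ℕ∞) : ℝ≥0∞ :=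
  if h : n = ⊤ then (if 0 < lam then 0 else if lam < 0 then ⊤ else 1)
  else ENNReal.ofReal (Real.exp (-lam * (n.untop h : ℕ)))

/-- `m_{T,U}(K, λ, k)` (with the paper's conventions for `K = ∅`). -/
def mPre (T : X → X) (U : Finset (Set X)) (K : Set X) (lam : ℝ) (k : ℕ) : ℝ≥0∞ :=
  if K = ∅ then (if lam < 0 then ⊤ else if lam = 0 then 1 else 0)
  else ⨅ (𝓔 : Set (Set X)) (_ : 𝓔.Countable) (_ : K ⊆ ⋃₀ 𝓔)
        (_ : ∀ E ∈ 𝓔, ∃ V ∈ dynRefine T (↑U) k, E ⊆ V),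
      ∑' E : 𝓔, expWeight lam (bowenN T U (E : Set X))

/-- `m_{T,U}(K, λ) = lim_{k → ∞} m_{T,U}(K, λ, k)`, the limit of the nondecreasing
sequence `k ↦ m_{T,U}(K, λ, k)`, i.e. its supremum. -/
def mBowen (T : X → X) (U : Finset (Set X)) (K : Set X) (lam : ℝ) : ℝ≥0∞ :=
  ⨆ k : ℕ, mPre T U K lam k

/-- `h^B_U(T,K) = inf {λ : m_{T,U}(K,λ) = 0}`. -/
def bowenEntropyOf (T : X → X) (U : Finset (Set X)) (K : Set X) : EReal :=
  ⨅ (lam : ℝ) (_ : mBowen T U K lam = 0), (lam : EReal)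

/-- The dimensional (Bowen) entropy `h^B(T, K)` of a subset `K`. -/
def bowenEntropy (T : X → X) (K : Set X) : EReal :=
  ⨆ (U : Finset (Set X)) (_ : IsFinOpenCover U), bowenEntropyOf T U K

/-- Souslin sets: sets of the form `⋃_{(i₁,i₂,…) ∈ ℕ^ℕ} ⋂_k E_{i₁,…,i_k}` with all the
`E_{i₁,…,i_k}` closed. -/
def IsSouslin (K : Set X) : Prop :=
  ∃ E : List ℕ → Set X, (∀ l, IsClosed (E l)) ∧
    K = ⋃ σ : ℕ → ℕ, ⋂ k : ℕ, E (List.ofFn fun i : Fin (k + 1) => σ i)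

def Lowerable (T : X → X) : Prop :=
  ∀ h : ℝ, 0 ≤ h → (h : EReal) ≤ coverEntropy T Set.univ →
    ∃ K : Set X, IsClosed K ∧ coverEntropy T K = (h : EReal)

def HereditarilyLowerable (T : X → X) : Prop :=
  ∀ K : Set X, IsClosed K → ∀ h : ℝ, 0 ≤ h → (h : EReal) ≤ coverEntropy T K →
    ∃ K' ⊆ K, IsClosed K' ∧ coverEntropy T K' = (h : EReal)

def DLowerable (T : X → X) : Prop :=
  ∀ h : ℝ, 0 ≤ h → (h : EReal) ≤ coverEntropy T Set.univ →
    ∃ K : Set X, bowenEntropy T K = (h : EReal)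

def DHereditarilyLowerable (T : X → X) : Prop :=
  ∀ K : Set X, IsSouslin K → ∀ h : ℝ, 0 ≤ h → (h : EReal) ≤ bowenEntropy T K →
    ∃ K' ⊆ K, bowenEntropy T K' = (h : EReal)

/-- `Φ_ε(x) = {y : d(Tⁿx, Tⁿy) ≤ ε for all n ≥ 0}`. -/
def phiSet {Y : Type*} [PseudoMetricSpace Y] (T : Y → Y) (ε : ℝ) (x : Y) : Set Y :=
  {y | ∀ n : ℕ, dist (T^[n] x) (T^[n] y) ≤ ε}

/-- Asymptotic h-expansiveness: `lim_{ε → 0+} sup_x h(T, Φ_ε(x)) = 0`. -/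
def AsympHExpansive {Y : Type*} [MetricSpace Y] (T : Y → Y) : Prop :=
  Filter.Tendsto (fun ε : ℝ => ⨆ x : Y, coverEntropy T (phiSet T ε x))
    (nhdsWithin 0 (Set.Ioi 0)) (nhds (0 : EReal))

/-- `N((U₁)₀ⁿ⁻¹ | (U₂)₀ⁿ⁻¹) = max_{V ∈ (U₂)₀ⁿ⁻¹} N((U₁)₀ⁿ⁻¹, V)`. -/
def relCoverNum (T : X → X) (U1 U2 : Finset (Set X)) (n : ℕ) : ℕ :=
  sSup {k : ℕ | ∃ V ∈ dynRefine T (↑U2) n, k = coverNum (dynRefine T (↑U1) n) V}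

/-- The topologically conditional entropy `h^*(T, X)`. -/
def condTopEntropy (T : X → X) : EReal :=
  ⨅ (U2 : Finset (Set X)) (_ : IsFinOpenCover U2),
    ⨆ (U1 : Finset (Set X)) (_ : IsFinOpenCover U1),
      ((⨅ n : ℕ, Real.log (relCoverNum T U1 U2 (n + 1)) / (n + 1) : ℝ) : EReal)



/-! ### Auxiliary lemmas -/

section Aux

open Metric

local notation "𝕊" => AddCircle (1:ℝ)

instance factOneLtReal : Fact ((0:ℝ) < 1) := ⟨one_pos⟩

set_option linter.unusedSectionVars false

lemma enat_eq_top_of_forall {x : ℕ∞} (h : ∀ n : ℕ, (n : ℕ∞) ≤ x) : x = ⊤ := by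
  cases x with
  | top => rfl
  | coe n => exact absurd (h (n+1)) (by exact_mod_cast Nat.not_succ_le_self n)

variable {Y : Type*} [TopologicalSpace Y]

lemma le_bowenN {T : Y → Y} {U : Finset (Set Y)} {E : Set Y} {n : ℕ}
    (h : ∀ i < n, ∃ u ∈ U, T^[i] '' E ⊆ u) : (n : ℕ∞) ≤ bowenN T U E :=
  le_iSup₂ (f := fun (j : ℕ) (_ : j ∈ {j : ℕ | ∀ i < j, ∃ u ∈ U, T^[i] '' E ⊆ u}) => (j : ℕ∞)) n h

lemma bowenN_prop {T : Y → Y} {U : Finset (Set Y)} {E : Set Y} {i : ℕ}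
    (h : (i : ℕ∞) < bowenN T U E) : ∃ u ∈ U, T^[i] '' E ⊆ u := by
  by_contra hc
  have hS : ∀ j ∈ {j : ℕ | ∀ i < j, ∃ u ∈ U, T^[i] '' E ⊆ u}, (j : ℕ∞) ≤ (i : ℕ∞) := by
    intro j hj
    rcases le_or_gt (j : ℕ∞) (i : ℕ∞) with h' | h'
    · exact h'
    · exact absurd (hj i (by exact_mod_cast h')) hc
  have hle : bowenN T U E ≤ (i : ℕ∞) := iSup₂_le hS
  exact absurd (h.trans_le hle) (lt_irrefl _)

lemma bowenN_empty {T : Y → Y} {U : Finset (Set Y)} (hU : U.Nonempty) :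
    bowenN T U (∅ : Set Y) = ⊤ :=
  enat_eq_top_of_forall fun n => le_bowenN fun i _ => ⟨hU.choose, hU.choose_spec, by simp⟩

lemma expWeight_coe (lam : ℝ) (n : ℕ) :
    expWeight lam (n : ℕ∞) = ENNReal.ofReal (Real.exp (-lam * n)) := by
  rw [expWeight, dif_neg (by simp : (n : ℕ∞) ≠ ⊤)]
  have h1 : ∀ h, WithTop.untop (↑n : ℕ∞) h = n := fun h => WithTop.untop_coe n h
  rfl

lemma expWeight_top {lam : ℝ} (h : 0 < lam) : expWeight lam ⊤ = 0 := by
  simp [expWeight, h]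

lemma expWeight_le_of_le {lam : ℝ} (hlam : 0 ≤ lam) {n : ℕ} {N : ℕ∞} (h : (n : ℕ∞) ≤ N) :
    expWeight lam N ≤ ENNReal.ofReal (Real.exp (-lam * n)) := by
  cases N with
  | top =>
    rcases eq_or_lt_of_le hlam with h0 | h0
    · rw [expWeight, dif_pos rfl, if_neg (by rw [← h0]; exact lt_irrefl 0),
        if_neg (by rw [← h0]; exact lt_irrefl 0), ← h0]
      rw [show -(0:ℝ) * n = 0 by ring, Real.exp_zero, ENNReal.ofReal_one]
    · rw [expWeight_top h0]; exact zero_le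
  | coe N =>
    rw [expWeight_coe]
    apply ENNReal.ofReal_le_ofReal
    apply Real.exp_le_exp.2
    have hnN : (n : ℝ) ≤ (N : ℝ) := by exact_mod_cast (by exact_mod_cast h : n ≤ N)
    nlinarith

lemma one_le_expWeight {lam : ℝ} (hlam : lam ≤ 0) (N : ℕ∞) : 1 ≤ expWeight lam N := by
  cases N with
  | top =>
    rw [expWeight, dif_pos rfl, if_neg (not_lt.2 hlam)]
    rcases lt_or_eq_of_le hlam with h | h
    · rw [if_pos h]; exact le_top
    · rw [if_neg (by rw [h]; exact lt_irrefl 0)]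
  | coe N =>
    rw [expWeight_coe]
    rw [show (1 : ℝ≥0∞) = ENNReal.ofReal (Real.exp 0) by simp]
    apply ENNReal.ofReal_le_ofReal
    apply Real.exp_le_exp.2
    nlinarith [Nat.cast_nonneg (α := ℝ) N]

lemma pos_of_mBowen_eq_zero {T : Y → Y} {U : Finset (Set Y)} {C : Set Y} (hC : C ≠ ∅)
    {lam : ℝ} (h : mBowen T U C lam = 0) : 0 < lam := by
  by_contra hneg
  push_neg at hneg
  have h0 : mPre T U C lam 0 ≤ mBowen T U C lam := le_iSup (fun k => mPre T U C lam k) 0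
  rw [h] at h0
  have h1 : (1 : ℝ≥0∞) ≤ mPre T U C lam 0 := by
    rw [mPre, if_neg hC]
    refine le_iInf fun 𝓔 => le_iInf fun hcnt => le_iInf fun hcov => le_iInf fun href => ?_
    obtain ⟨x, hx⟩ := Set.nonempty_iff_ne_empty.2 hC
    obtain ⟨E, hE, hxE⟩ := hcov hx
    exact le_trans (one_le_expWeight hneg _) (ENNReal.le_tsum (⟨E, hE⟩ : 𝓔))
  exact absurd (h1.trans h0) (by simp)

end Aux


section Circle

open Metric

local notation "𝕊" => AddCircle (1:ℝ)

lemma norm_coe_eq_abs {x : ℝ} (h : |x| ≤ 1/2) : ‖((x:ℝ) : 𝕊)‖ = |x| :=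
  (AddCircle.norm_coe_eq_abs_iff (1:ℝ) one_ne_zero).2 (by simpa using h)

lemma exists_lift (z : 𝕊) : ∃ x : ℝ, ((x : ℝ) : 𝕊) = z ∧ |x| = ‖z‖ ∧ |x| ≤ 1/2 := by
  obtain ⟨y, rfl⟩ := Quotient.exists_rep z
  have hy : (Quotient.mk _ y : 𝕊) = ((y : ℝ) : 𝕊) := rfl
  rw [hy]
  have h0 : ((round y : ℝ) : 𝕊) = 0 := by
    rw [AddCircle.coe_eq_zero_iff]
    exact ⟨round y, by simp⟩
  have hcoe : ((y - round y : ℝ) : 𝕊) = ((y : ℝ) : 𝕊) := by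
    have : ((y - round y : ℝ) : 𝕊) = ((y:ℝ) : 𝕊) - ((round y : ℝ) : 𝕊) := by
      push_cast [QuotientAddGroup.mk_sub]; ring_nf
    rw [this, h0, sub_zero]
  refine ⟨y - round y, hcoe, ?_, abs_sub_round y⟩
  rw [← hcoe, norm_coe_eq_abs (abs_sub_round y)]

lemma norm_nsmul_eq (m : ℕ) (hm : 1 ≤ m) {z : 𝕊} (hz : ‖z‖ ≤ 1/(2*(m:ℝ))) :
    ‖m • z‖ = m * ‖z‖ := by
  have hm0 : (0:ℝ) < m := by exact_mod_cast hm
  obtain ⟨x, rfl, hx, hx2⟩ := exists_lift z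
  rw [← hx] at hz ⊢
  have h1 : (m : ℕ) • ((x:ℝ) : 𝕊) = ((m * x : ℝ) : 𝕊) := by
    rw [← AddCircle.coe_nsmul]; norm_num [nsmul_eq_mul]
  have habs : |(m:ℝ) * x| ≤ 1/2 := by
    rw [abs_mul, Nat.abs_cast]
    calc (m:ℝ) * |x| ≤ (m:ℝ) * (1/(2*m)) := mul_le_mul_of_nonneg_left hz hm0.le
      _ = 1/2 := by field_simp
  rw [h1, norm_coe_eq_abs habs, abs_mul, Nat.abs_cast]

lemma dist_nsmul_eq (m : ℕ) (hm : 1 ≤ m) {x y : 𝕊} (h : dist x y ≤ 1/(2*(m:ℝ))) :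
    dist (m • x) (m • y) = m * dist x y := by
  rw [dist_eq_norm] at h ⊢
  rw [← smul_sub, norm_nsmul_eq m hm h, dist_eq_norm]

lemma dist_nsmul_le (m : ℕ) (x y : 𝕊) : dist (m • x) (m • y) ≤ m * dist x y := by
  rw [dist_eq_norm, dist_eq_norm, ← smul_sub]
  exact norm_nsmul_le

lemma dist_le_half (x y : 𝕊) : dist x y ≤ 1/2 := by
  rw [dist_eq_norm]
  simpa using AddCircle.norm_le_half_period (p := (1:ℝ)) one_ne_zero

lemma iterate_smul_dist_le (m : ℕ) (i : ℕ) (x y : 𝕊) :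
    dist ((fun z : 𝕊 => m • z)^[i] x) ((fun z : 𝕊 => m • z)^[i] y) ≤ (m:ℝ)^i * dist x y := by
  induction i with
  | zero => simp
  | succ i ih =>
    rw [Function.iterate_succ_apply', Function.iterate_succ_apply']
    calc dist (m • ((fun z : 𝕊 => m • z)^[i] x)) (m • ((fun z : 𝕊 => m • z)^[i] y))
        ≤ m * dist ((fun z : 𝕊 => m • z)^[i] x) ((fun z : 𝕊 => m • z)^[i] y) :=
          dist_nsmul_le m _ _
      _ ≤ (m:ℝ) * ((m:ℝ)^i * dist x y) :=
          mul_le_mul_of_nonneg_left ih (Nat.cast_nonneg m)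
      _ = (m:ℝ)^(i+1) * dist x y := by ring

lemma shadow_dist (m : ℕ) (hm : 2 ≤ m) {δ : ℝ} (hδ : δ ≤ 1/(2*(m:ℝ))) :
    ∀ (n : ℕ) (x y : 𝕊),
      (∀ i ≤ n, dist ((fun z : 𝕊 => m • z)^[i] x) ((fun z : 𝕊 => m • z)^[i] y) ≤ δ) →
      dist x y ≤ δ / (m:ℝ)^n := by
  have hm0 : (0:ℝ) < m := by positivity
  intro n
  induction n with
  | zero => intro x y h; simpa using h 0 le_rfl
  | succ n ih =>
    intro x y h
    have h0 : dist x y ≤ δ := by simpa using h 0 (Nat.zero_le _)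
    have h1 : ∀ i ≤ n, dist ((fun z : 𝕊 => m • z)^[i] (m • x))
        ((fun z : 𝕊 => m • z)^[i] (m • y)) ≤ δ := by
      intro i hi
      have h2 := h (i+1) (by omega)
      rwa [Function.iterate_succ_apply, Function.iterate_succ_apply] at h2
    have h2 := ih (m • x) (m • y) h1
    rw [dist_nsmul_eq m (by omega) (h0.trans hδ)] at h2
    rw [pow_succ]
    rw [le_div_iff₀ (by positivity)] at h2 ⊢
    calc dist x y * ((m:ℝ)^n * m) = (m:ℝ) * dist x y * (m:ℝ)^n := by ring
      _ ≤ δ := h2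

lemma rpow_pow_inv (m : ℕ) (hm : 2 ≤ m) (t : ℝ) (N : ℕ) :
    (((m:ℝ)^N)⁻¹) ^ t = Real.exp (-(t * Real.log m) * N) := by
  have hpos : (0:ℝ) < ((m:ℝ)^N)⁻¹ := by positivity
  rw [Real.rpow_def_of_pos hpos, Real.log_inv, Real.log_pow]
  ring_nf

lemma exists_mem_of_cover {U : Finset (Set 𝕊)} (hU : IsFinOpenCover U) : ∃ u, u ∈ U := by
  have h0 : (0:𝕊) ∈ ⋃₀ (U : Set (Set 𝕊)) := by rw [hU.2]; trivial
  obtain ⟨u, hu, -⟩ := h0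
  exact ⟨u, hu⟩

lemma exists_lebesgue {U : Finset (Set 𝕊)} (hU : IsFinOpenCover U) :
    ∃ δ : ℝ, 0 < δ ∧ ∀ x : 𝕊, ∃ u ∈ U, ball x δ ⊆ u := by
  have hcov : (Set.univ : Set 𝕊) ⊆ ⋃ u : (U : Set (Set 𝕊)), (u : Set 𝕊) := by
    rw [← Set.sUnion_eq_iUnion, hU.2]
  obtain ⟨δ, hδ, h⟩ := lebesgue_number_lemma_of_metric isCompact_univ
    (fun u : (U : Set (Set 𝕊)) => hU.1 u u.2) hcov
  exact ⟨δ, hδ, fun x => by obtain ⟨u, hu⟩ := h x trivial; exact ⟨u, u.2, hu⟩⟩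

lemma exists_ball_cover {δ₀ : ℝ} (hδ₀ : 0 < δ₀) :
    ∃ U : Finset (Set 𝕊), IsFinOpenCover U ∧
      ∀ u ∈ U, ∀ x ∈ u, ∀ y ∈ u, dist x y ≤ 2*δ₀ := by
  obtain ⟨s, hs⟩ := isCompact_univ.elim_finite_subcover (fun x : 𝕊 => ball x δ₀)
    (fun _ => isOpen_ball) (fun x _ => Set.mem_iUnion.2 ⟨x, mem_ball_self hδ₀⟩)
  refine ⟨s.image (fun c => ball c δ₀), ⟨?_, ?_⟩, ?_⟩
  · intro u hu
    obtain ⟨c, -, rfl⟩ := Finset.mem_image.1 hu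
    exact isOpen_ball
  · apply Set.eq_univ_of_univ_subset
    intro x hx
    obtain ⟨c, hc, hxc⟩ := Set.mem_iUnion₂.1 (hs hx)
    exact ⟨ball c δ₀, by simpa using Finset.mem_image_of_mem _ hc, hxc⟩
  · intro u hu x hx y hy
    obtain ⟨c, -, rfl⟩ := Finset.mem_image.1 hu
    calc dist x y ≤ dist x c + dist c y := dist_triangle _ _ _
      _ ≤ δ₀ + δ₀ := by
          rw [mem_ball] at hx hy
          rw [dist_comm c y]
          exact add_le_add hx.le hy.le
      _ = 2*δ₀ := by ring

end Circle


section MainA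

open Metric

local notation "𝕊" => AddCircle (1:ℝ)

lemma mBowen_eq_zero {m : ℕ} (hm : 2 ≤ m) {C : Set 𝕊} (hC : C ≠ ∅)
    {U : Finset (Set 𝕊)} (hU : IsFinOpenCover U) {lam : ℝ} (hlam0 : 0 < lam)
    (hμ : μH[lam / Real.log (m:ℝ)] C = 0) :
    mBowen (fun z : 𝕊 => m • z) U C lam = 0 := by
  set T : 𝕊 → 𝕊 := fun z => m • z with hT
  have hm1 : (1:ℝ) < m := by exact_mod_cast hm
  have hmpos : (0:ℝ) < m := by positivity
  have hlog : 0 < Real.log m := Real.log_pos hm1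
  set t : ℝ := lam / Real.log m with ht
  have htpos : 0 < t := div_pos hlam0 hlog
  have hlamt : t * Real.log m = lam := div_mul_cancel₀ _ hlog.ne'
  obtain ⟨δ, hδpos, hLeb⟩ := exists_lebesgue hU
  obtain ⟨u₀, hu₀⟩ := exists_mem_of_cover hU
  have hbound : ∀ A : Set 𝕊, Bornology.IsBounded A :=
    fun A => (isCompact_univ.isBounded).subset (Set.subset_univ A)
  have hsub : ∀ (A : Set 𝕊) (x₀ : 𝕊), x₀ ∈ A → ∀ i : ℕ, (m:ℝ)^i * Metric.diam A < δ →
      ∃ u ∈ U, T^[i] '' A ⊆ u := by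
    intro A x₀ hx₀ i hi
    obtain ⟨u, hu, hball⟩ := hLeb (T^[i] x₀)
    refine ⟨u, hu, ?_⟩
    rintro _ ⟨y, hy, rfl⟩
    apply hball
    rw [mem_ball]
    calc dist (T^[i] y) (T^[i] x₀) ≤ (m:ℝ)^i * dist y x₀ := iterate_smul_dist_le m i y x₀
      _ ≤ (m:ℝ)^i * Metric.diam A := by
          apply mul_le_mul_of_nonneg_left (Metric.dist_le_diam_of_mem (hbound A) hy hx₀)
          positivity
      _ < δ := hi
  suffices hk : ∀ k, mPre T U C lam k = 0 by
    rw [mBowen]; simp [hk]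
  intro k
  rw [mPre, if_neg hC]
  refine le_antisymm ?_ (zero_le)
  refine ENNReal.le_of_forall_pos_le_add fun ε hε _ => ?_
  rw [zero_add]
  set ε' : ℝ≥0∞ := (ε : ℝ≥0∞) * ENNReal.ofReal (δ ^ t) with hε'
  have hε'pos : 0 < ε' := by
    rw [hε']
    apply ENNReal.mul_pos
    · exact_mod_cast hε.ne'
    · simp only [Ne, ENNReal.ofReal_eq_zero, not_le]
      positivity
  set r : ℝ := δ / (m:ℝ)^k with hr
  have hrpos : 0 < r := by rw [hr]; positivity
  have h1 : (⨅ (A : ℕ → Set 𝕊) (_ : C ⊆ ⋃ n, A n)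
        (_ : ∀ n, EMetric.diam (A n) ≤ ENNReal.ofReal r),
      ∑' n, ⨆ _ : (A n).Nonempty, EMetric.diam (A n) ^ t) < ε' := by
    have hle : (⨅ (A : ℕ → Set 𝕊) (_ : C ⊆ ⋃ n, A n)
          (_ : ∀ n, EMetric.diam (A n) ≤ ENNReal.ofReal r),
        ∑' n, ⨆ _ : (A n).Nonempty, EMetric.diam (A n) ^ t) ≤ μH[t] C := by
      rw [MeasureTheory.Measure.hausdorffMeasure_apply]
      exact le_iSup₂ (α := ℝ≥0∞) (ENNReal.ofReal r) (by simpa using hrpos)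
    rw [hμ] at hle
    exact lt_of_le_of_lt hle hε'pos
  rw [iInf_lt_iff] at h1; obtain ⟨A, h1⟩ := h1
  rw [iInf_lt_iff] at h1; obtain ⟨hcov, h1⟩ := h1
  rw [iInf_lt_iff] at h1; obtain ⟨hmesh, hsum⟩ := h1
  -- the diameters are at most r
  have hdle : ∀ n, Metric.diam (A n) ≤ r := by
    intro n
    rw [Metric.diam]
    calc (EMetric.diam (A n)).toReal ≤ (ENNReal.ofReal r).toReal :=
          ENNReal.toReal_mono ENNReal.ofReal_ne_top (hmesh n)
      _ = r := ENNReal.toReal_ofReal hrpos.le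
  -- per-index weight bound
  have hwt : ∀ n : ℕ, expWeight lam (bowenN T U (A n)) ≤
      ENNReal.ofReal (δ ^ (-t)) * (⨆ _ : (A n).Nonempty, EMetric.diam (A n) ^ t) := by
    intro n
    rcases Set.eq_empty_or_nonempty (A n) with hAe | ⟨x₀, hx₀⟩
    · rw [hAe, bowenN_empty ⟨u₀, hu₀⟩, expWeight_top hlam0]
      exact zero_le
    · rw [iSup_pos ⟨x₀, hx₀⟩]
      rcases eq_or_ne (EMetric.diam (A n)) 0 with hd0 | hd0
      · have htop : bowenN T U (A n) = ⊤ := by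
          apply enat_eq_top_of_forall
          intro j
          apply le_bowenN
          intro i _
          apply hsub (A n) x₀ hx₀
          have hdz : Metric.diam (A n) = 0 := by rw [Metric.diam]; show (EMetric.diam (A n)).toReal = 0; rw [hd0]; simp
          rw [hdz, mul_zero]; exact hδpos
        rw [htop, expWeight_top hlam0]
        exact zero_le
      · have hdtop : EMetric.diam (A n) ≠ ⊤ :=
          ne_top_of_le_ne_top ENNReal.ofReal_ne_top (hmesh n)
        set d : ℝ := Metric.diam (A n) with hd
        have hdpos : 0 < d := by
          rw [hd, Metric.diam]; exact ENNReal.toReal_pos hd0 hdtop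
        obtain ⟨j, hj⟩ := pow_unbounded_of_one_lt (δ / d) hm1
        have hex : ∃ j : ℕ, δ ≤ (m:ℝ)^j * d := ⟨j, by
          rw [← div_le_iff₀ hdpos]; exact hj.le⟩
        set N := Nat.find hex with hN
        have hNspec : δ ≤ (m:ℝ)^N * d := Nat.find_spec hex
        have hNlt : ∀ i < N, (m:ℝ)^i * d < δ := fun i hi => not_le.1 (Nat.find_min hex hi)
        have hbN : (N : ℕ∞) ≤ bowenN T U (A n) :=
          le_bowenN fun i hi => hsub (A n) x₀ hx₀ i (hNlt i hi)
        calc expWeight lam (bowenN T U (A n)) ≤ ENNReal.ofReal (Real.exp (-lam * N)) :=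
              expWeight_le_of_le hlam0.le hbN
          _ ≤ ENNReal.ofReal (δ ^ (-t) * d ^ t) := by
              apply ENNReal.ofReal_le_ofReal
              have e1 : Real.exp (-lam * N) = (((m:ℝ)^N)⁻¹) ^ t := by
                rw [rpow_pow_inv m hm t N, hlamt]
              rw [e1]
              have e2 : ((m:ℝ)^N)⁻¹ ≤ d / δ := by
                rw [inv_eq_one_div, div_le_div_iff₀ (by positivity) hδpos]
                nlinarith [hNspec]
              calc (((m:ℝ)^N)⁻¹) ^ t ≤ (d/δ) ^ t :=
                    Real.rpow_le_rpow (by positivity) e2 htpos.le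
                _ = δ ^ (-t) * d ^ t := by
                    rw [Real.div_rpow hdpos.le hδpos.le, Real.rpow_neg hδpos.le]
                    ring
          _ ≤ ENNReal.ofReal (δ ^ (-t)) * EMetric.diam (A n) ^ t := by
              rw [ENNReal.ofReal_mul (Real.rpow_nonneg hδpos.le _)]
              have e3 : EMetric.diam (A n) = ENNReal.ofReal d := by
                rw [hd, Metric.diam]; exact (ENNReal.ofReal_toReal hdtop).symm
              rw [e3, ENNReal.ofReal_rpow_of_pos hdpos]
  -- the Bowen cover
  set 𝓔 : Set (Set 𝕊) := Set.range A with h𝓔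
  have hrefine : ∀ E ∈ 𝓔, ∃ V ∈ dynRefine T (↑U) k, E ⊆ V := by
    rintro E ⟨n, rfl⟩
    rcases Set.eq_empty_or_nonempty (A n) with hAe | ⟨x₀, hx₀⟩
    · exact ⟨⋂ i ∈ Finset.range k, T^[i] ⁻¹' u₀, ⟨fun _ => u₀, fun _ _ => hu₀, rfl⟩,
        by rw [hAe]; exact Set.empty_subset _⟩
    · have hsmall : ∀ i < k, (m:ℝ)^i * Metric.diam (A n) < δ := by
        intro i hik
        have hmk : ((m:ℝ))^k ≠ 0 := by positivity
        calc (m:ℝ)^i * Metric.diam (A n) ≤ (m:ℝ)^i * r :=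
              mul_le_mul_of_nonneg_left (hdle n) (by positivity)
          _ < (m:ℝ)^k * r := by
              apply mul_lt_mul_of_pos_right _ hrpos
              exact pow_lt_pow_right₀ hm1 hik
          _ = δ := by rw [hr, mul_comm, div_mul_cancel₀ _ hmk]
      have hch : ∀ i, i < k → ∃ u ∈ U, T^[i] '' (A n) ⊆ u :=
        fun i hi => hsub (A n) x₀ hx₀ i (hsmall i hi)
      classical
      refine ⟨⋂ i ∈ Finset.range k, T^[i] ⁻¹' (fun i => if h : i < k then (hch i h).choose else u₀) i,
        ⟨fun i => if h : i < k then (hch i h).choose else u₀, fun i hi => ?_, rfl⟩, ?_⟩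
      · simp only [dif_pos hi]; exact (hch i hi).choose_spec.1
      · apply Set.subset_iInter₂
        intro i hi
        rw [Finset.mem_range] at hi
        rw [← Set.image_subset_iff]
        simpa [dif_pos hi] using (hch i hi).choose_spec.2
  have hstep : (⨅ (𝓔' : Set (Set 𝕊)) (_ : 𝓔'.Countable) (_ : C ⊆ ⋃₀ 𝓔')
        (_ : ∀ E ∈ 𝓔', ∃ V ∈ dynRefine T (↑U) k, E ⊆ V),
      ∑' E : 𝓔', expWeight lam (bowenN T U (E : Set 𝕊))) ≤
      ∑' E : 𝓔, expWeight lam (bowenN T U (E : Set 𝕊)) := by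
    refine iInf_le_of_le 𝓔 ?_
    refine iInf_le_of_le (Set.countable_range A) ?_
    refine iInf_le_of_le (by rw [h𝓔, Set.sUnion_range]; exact hcov) ?_
    exact iInf_le _ hrefine
  refine hstep.trans ?_
  have hjA : ∀ E : 𝓔, A ((Set.mem_range.mp E.2).choose) = (E : Set 𝕊) :=
    fun E => (Set.mem_range.mp E.2).choose_spec
  have hinj : Function.Injective (fun E : 𝓔 => (Set.mem_range.mp E.2).choose) := by
    intro E1 E2 h12
    change (Set.mem_range.mp E1.2).choose = (Set.mem_range.mp E2.2).choose at h12
    apply Subtype.ext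
    rw [← hjA E1, ← hjA E2, h12]
  calc ∑' E : 𝓔, expWeight lam (bowenN T U (E : Set 𝕊))
      = ∑' E : 𝓔, expWeight lam (bowenN T U (A ((Set.mem_range.mp E.2).choose))) := by
        apply tsum_congr; intro E; rw [hjA E]
    _ ≤ ∑' n, expWeight lam (bowenN T U (A n)) :=
        ENNReal.tsum_comp_le_tsum_of_injective hinj _
    _ ≤ ∑' n, ENNReal.ofReal (δ ^ (-t)) * (⨆ _ : (A n).Nonempty, EMetric.diam (A n) ^ t) :=
        ENNReal.tsum_le_tsum hwt
    _ = ENNReal.ofReal (δ ^ (-t)) * ∑' n, (⨆ _ : (A n).Nonempty, EMetric.diam (A n) ^ t) :=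
        ENNReal.tsum_mul_left
    _ ≤ ENNReal.ofReal (δ ^ (-t)) * ε' := mul_le_mul_right hsum.le _
    _ = (ε : ℝ≥0∞) * (ENNReal.ofReal (δ ^ (-t)) * ENNReal.ofReal (δ ^ t)) := by
        rw [hε']; ring
    _ = ε := by
        have hone : δ ^ (-t) * δ ^ t = 1 := by
          rw [Real.rpow_neg hδpos.le]
          exact inv_mul_cancel₀ (ne_of_gt (Real.rpow_pos_of_pos hδpos t))
        rw [← ENNReal.ofReal_mul (Real.rpow_nonneg hδpos.le _), hone, ENNReal.ofReal_one, mul_one]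

end MainA


section MainB

open Metric Filter Topology

local notation "𝕊" => AddCircle (1:ℝ)

lemma hausdorffMeasure_eq_zero_of_mBowen {m : ℕ} (hm : 2 ≤ m) {C : Set 𝕊} (hC : C ≠ ∅)
    {U₀ : Finset (Set 𝕊)}
    (hU₀small : ∀ u ∈ U₀, ∀ x ∈ u, ∀ y ∈ u, dist x y ≤ 1/(4*(m:ℝ)))
    {lam : ℝ} (hlam0 : 0 < lam)
    (hB : mBowen (fun z : 𝕊 => m • z) U₀ C lam = 0) :
    μH[lam / Real.log (m:ℝ)] C = 0 := by
  set T : 𝕊 → 𝕊 := fun z => m • z with hT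
  have hm1 : (1:ℝ) < m := by exact_mod_cast hm
  have hmpos : (0:ℝ) < m := by positivity
  have hlog : 0 < Real.log m := Real.log_pos hm1
  set t : ℝ := lam / Real.log m with ht
  have htpos : 0 < t := div_pos hlam0 hlog
  have hlamt : t * Real.log m = lam := div_mul_cancel₀ _ hlog.ne'
  set db : ℝ := 1/(4*(m:ℝ)) with hdbdef
  have hdbpos : 0 < db := by rw [hdbdef]; positivity
  have hdble : db ≤ 1/(2*(m:ℝ)) := by
    rw [hdbdef, div_le_div_iff₀ (by positivity) (by positivity)]
    nlinarith
  have hkey : ∀ (E : Set 𝕊) (n : ℕ),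
      (∀ i ≤ n, ∃ u ∈ U₀, T^[i] '' E ⊆ u) →
      ∀ x ∈ E, ∀ y ∈ E, dist x y ≤ db / (m:ℝ)^n := by
    intro E n hiU x hx y hy
    apply shadow_dist m hm hdble n
    intro i hi
    obtain ⟨u, hu, hTu⟩ := hiU i hi
    exact hU₀small u hu _ (hTu ⟨x, hx, rfl⟩) _ (hTu ⟨y, hy, rfl⟩)
  have hmPre : ∀ k, mPre T U₀ C lam k = 0 := by
    intro k
    refine le_antisymm ?_ (zero_le)
    rw [← hB]
    exact le_iSup (fun k => mPre T U₀ C lam k) k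
  have hwt : ∀ E : Set 𝕊, EMetric.diam E ^ t ≤ expWeight lam (bowenN T U₀ E) := by
    intro E
    cases hN : bowenN T U₀ E with
    | top =>
      have hdist : ∀ x ∈ E, ∀ y ∈ E, dist x y = 0 := by
        intro x hx y hy
        have hle : ∀ n : ℕ, dist x y ≤ db / (m:ℝ)^n := by
          intro n
          refine hkey E n (fun i _ => ?_) x hx y hy
          exact bowenN_prop (by rw [hN]; exact lt_of_le_of_ne le_top (by simp))
        by_contra hne
        have hpos : 0 < dist x y := lt_of_le_of_ne dist_nonneg (Ne.symm hne)
        obtain ⟨n, hn⟩ := pow_unbounded_of_one_lt (db / dist x y) hm1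
        have : db / (m:ℝ)^n < dist x y := by
          rw [div_lt_iff₀ (by positivity)]
          rw [div_lt_iff₀ hpos] at hn
          nlinarith
        exact absurd (hle n) (not_le.2 this)
      have hzero : EMetric.diam E = 0 := by
        refine le_antisymm ?_ (zero_le)
        apply EMetric.diam_le
        intro x hx y hy
        rw [edist_dist, hdist x hx y hy]
        simp
      rw [hzero, ENNReal.zero_rpow_of_pos htpos]
      exact zero_le
    | coe N =>
      rw [expWeight_coe]
      cases N with
      | zero =>
        have h1 : EMetric.diam E ≤ 1 := by
          apply EMetric.diam_le
          intro x hx y hy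
          rw [edist_dist]
          calc ENNReal.ofReal (dist x y) ≤ ENNReal.ofReal (1/2) :=
                ENNReal.ofReal_le_ofReal (dist_le_half x y)
            _ ≤ 1 := by rw [show (1:ℝ≥0∞) = ENNReal.ofReal 1 by simp]; exact ENNReal.ofReal_le_ofReal (by norm_num)
        calc EMetric.diam E ^ t ≤ 1 := ENNReal.rpow_le_one h1 htpos.le
          _ = ENNReal.ofReal (Real.exp (-lam * ((0:ℕ):ℝ))) := by
              rw [Nat.cast_zero, mul_zero, Real.exp_zero, ENNReal.ofReal_one]
      | succ n =>
        have hprop : ∀ i ≤ n, ∃ u ∈ U₀, T^[i] '' E ⊆ u := by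
          intro i hi
          apply bowenN_prop
          rw [hN]
          exact_mod_cast (by omega : i < n+1)
        have hdiam : EMetric.diam E ≤ ENNReal.ofReal (db / (m:ℝ)^n) := by
          apply EMetric.diam_le
          intro x hx y hy
          rw [edist_dist]
          exact ENNReal.ofReal_le_ofReal (hkey E n hprop x hx y hy)
        have e4 : ((m:ℝ)^(n+1))⁻¹ * (m:ℝ)^n = ((m:ℝ))⁻¹ := by
          rw [pow_succ, mul_inv]
          field_simp
        have hle2 : db / (m:ℝ)^n ≤ (((m:ℝ)^(n+1))⁻¹) := by
          rw [div_le_iff₀ (by positivity), e4]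
          rw [hdbdef, inv_eq_one_div, div_le_div_iff₀ (by positivity) hmpos]
          nlinarith
        calc EMetric.diam E ^ t ≤ ENNReal.ofReal ((((m:ℝ)^(n+1))⁻¹)) ^ t := by
              apply ENNReal.rpow_le_rpow _ htpos.le
              exact hdiam.trans (ENNReal.ofReal_le_ofReal hle2)
          _ = ENNReal.ofReal ((((m:ℝ)^(n+1))⁻¹) ^ t) := ENNReal.ofReal_rpow_of_pos (by positivity)
          _ = ENNReal.ofReal (Real.exp (-lam * ((n+1:ℕ):ℝ))) := by
              rw [rpow_pow_inv m hm t (n+1), hlamt]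
  -- extraction of covers
  have hex : ∀ (k : ℕ) (ε : ℝ≥0∞), 0 < ε → ∃ 𝓔 : Set (Set 𝕊), 𝓔.Countable ∧ C ⊆ ⋃₀ 𝓔 ∧
      (∀ E ∈ 𝓔, ∃ V ∈ dynRefine T (↑U₀) (k+1), E ⊆ V) ∧
      ∑' E : 𝓔, expWeight lam (bowenN T U₀ (E : Set 𝕊)) < ε := by
    intro k ε hε
    have h1 : mPre T U₀ C lam (k+1) < ε := by rw [hmPre]; exact hε
    rw [mPre, if_neg hC] at h1
    rw [iInf_lt_iff] at h1; obtain ⟨𝓔, h1⟩ := h1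
    rw [iInf_lt_iff] at h1; obtain ⟨hcnt, h1⟩ := h1
    rw [iInf_lt_iff] at h1; obtain ⟨hcov, h1⟩ := h1
    rw [iInf_lt_iff] at h1; obtain ⟨href, h1⟩ := h1
    exact ⟨𝓔, hcnt, hcov, href, h1⟩
  refine le_antisymm ?_ (zero_le)
  refine ENNReal.le_of_forall_pos_le_add fun ε hε _ => ?_
  rw [zero_add]
  have hεpos : (0:ℝ≥0∞) < ε := by exact_mod_cast hε
  choose 𝓔 hcnt hcov href hsum using fun k => hex k ε hεpos
  haveI : ∀ k, Countable (𝓔 k) := fun k => (hcnt k).to_subtype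
  have hmesh : ∀ k, ∀ E : 𝓔 k, EMetric.diam (E : Set 𝕊) ≤ ENNReal.ofReal (db / (m:ℝ)^k) := by
    intro k E
    obtain ⟨V, ⟨f, hf, rfl⟩, hEV⟩ := href k E E.2
    have hprop : ∀ i ≤ k, ∃ u ∈ U₀, T^[i] '' (E:Set 𝕊) ⊆ u := by
      intro i hi
      refine ⟨f i, hf i (by omega), ?_⟩
      rw [Set.image_subset_iff]
      exact hEV.trans (Set.biInter_subset_of_mem (Finset.mem_range.2 (by omega)))
    apply EMetric.diam_le
    intro x hx y hy
    rw [edist_dist]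
    exact ENNReal.ofReal_le_ofReal (hkey _ k hprop x hx y hy)
  have hr0 : Tendsto (fun k : ℕ => ENNReal.ofReal (db / (m:ℝ)^k)) atTop (𝓝 0) := by
    rw [← ENNReal.ofReal_zero]
    apply ENNReal.tendsto_ofReal
    have heq : ∀ k:ℕ, db / (m:ℝ)^k = db * ((m:ℝ)⁻¹)^k := by
      intro k; rw [div_eq_mul_inv, inv_pow]
    have h5 : Tendsto (fun k:ℕ => db * ((m:ℝ)⁻¹)^k) atTop (𝓝 (db * 0)) :=
      (tendsto_pow_atTop_nhds_zero_of_lt_one (by positivity)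
        (inv_lt_one_of_one_lt₀ hm1)).const_mul db
    rw [mul_zero] at h5
    simpa [heq] using h5
  have hμle := MeasureTheory.Measure.hausdorffMeasure_le_liminf_tsum t C
      (fun k : ℕ => ENNReal.ofReal (db / (m:ℝ)^k)) hr0
      (fun k (E : 𝓔 k) => (E : Set 𝕊))
      (Filter.Eventually.of_forall hmesh)
      (Filter.Eventually.of_forall fun k => by
        rw [← Set.sUnion_eq_iUnion]; exact hcov k)
  refine hμle.trans ?_
  have hterm : ∀ k, (∑' E : 𝓔 k, EMetric.diam (E : Set 𝕊) ^ t) ≤ ε := by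
    intro k
    exact le_trans (ENNReal.tsum_le_tsum fun E => hwt (E : Set 𝕊)) (hsum k).le
  calc liminf (fun k => ∑' E : 𝓔 k, EMetric.diam (E : Set 𝕊) ^ t) atTop
      ≤ liminf (fun _ : ℕ => (ε:ℝ≥0∞)) atTop :=
        liminf_le_liminf (Eventually.of_forall hterm)
    _ = ε := liminf_const _

end MainB


section Assemble

open Metric

local notation "𝕊" => AddCircle (1:ℝ)

lemma lipschitz_coe : LipschitzWith 1 (fun x : ℝ => ((x:ℝ) : 𝕊)) := by
  apply LipschitzWith.of_dist_le_mul
  intro x y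
  rw [NNReal.coe_one, one_mul, dist_eq_norm, dist_eq_norm]
  have h1 : ((x:ℝ):𝕊) - ((y:ℝ):𝕊) = (((x - y : ℝ)):𝕊) := by
    rw [QuotientAddGroup.mk_sub]
  rw [h1, Real.norm_eq_abs]
  calc ‖(((x - y : ℝ)):𝕊)‖ ≤ ‖x - y‖ := QuotientAddGroup.norm_mk_le_norm
    _ = |x - y| := Real.norm_eq_abs _

lemma dimH_circle_le (C : Set 𝕊) : dimH C ≤ 1 := by
  have hsurj : Function.Surjective (fun x : ℝ => ((x:ℝ) : 𝕊)) := by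
    intro z
    obtain ⟨x, hx, -⟩ := exists_lift z
    exact ⟨x, hx⟩
  calc dimH C ≤ dimH (Set.univ : Set 𝕊) := dimH_mono (Set.subset_univ C)
    _ = dimH ((fun x : ℝ => ((x:ℝ) : 𝕊)) '' Set.univ) := by
        rw [Set.image_univ, Set.range_eq_univ.2 hsurj]
    _ ≤ dimH (Set.univ : Set ℝ) := lipschitz_coe.dimH_image_le _
    _ = 1 := Real.dimH_univ

lemma ereal_le_coe_of_forall {a : EReal} {b : ℝ} (h : ∀ c : ℝ, b < c → a ≤ (c : EReal)) :
    a ≤ (b : EReal) := by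
  by_contra hab
  push_neg at hab
  obtain ⟨y, hy1, hy2⟩ := EReal.exists_between_coe_real hab
  exact absurd (h y (by exact_mod_cast hy1)) (not_le.2 hy2)

end Assemble

/-- On the circle `𝕋 = ℝ/ℤ` with the quotient metric, for `T_m : z ↦ z^m` (`m ≥ 2`) the
Hausdorff dimension of any subset `C` equals `h^B(T_m, C) / log m`. -/
theorem dimH_mul_log_eq_bowenEntropy (m : ℕ) (hm : 2 ≤ m) (C : Set (AddCircle (1 : ℝ))) :
    (dimH C : EReal) * ((Real.log m : ℝ) : EReal) =
      bowenEntropy (fun z : AddCircle (1 : ℝ) => m • z) C := by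
  have hm1 : (1:ℝ) < m := by exact_mod_cast hm
  have hmpos : (0:ℝ) < m := by positivity
  have hlog : 0 < Real.log m := Real.log_pos hm1
  set T : AddCircle (1:ℝ) → AddCircle (1:ℝ) := fun z => m • z with hT
  have hdtop : dimH C ≠ ⊤ := ((dimH_circle_le C).trans_lt (by norm_num)).ne
  set d₀ : ℝ := (dimH C).toReal * Real.log m with hd₀
  have hd₀0 : 0 ≤ d₀ := mul_nonneg ENNReal.toReal_nonneg hlog.le
  have hLHS : (dimH C : EReal) * ((Real.log m : ℝ) : EReal) = ((d₀ : ℝ) : EReal) := by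
    have h1 : (dimH C : EReal) = (((dimH C).toReal : ℝ) : EReal) := by
      conv_lhs => rw [← ENNReal.ofReal_toReal hdtop]
      rw [EReal.coe_ennreal_ofReal, max_eq_left ENNReal.toReal_nonneg]
    rw [h1, ← EReal.coe_mul]
  rw [hLHS]
  rcases eq_or_ne C ∅ with rfl | hC
  · have hd₀' : d₀ = 0 := by rw [hd₀, dimH_empty]; simp
    rw [hd₀']
    have hmB : ∀ (U : Finset (Set (AddCircle (1:ℝ)))) (lam : ℝ),
        mBowen T U ∅ lam = 0 ↔ 0 < lam := by
      intro U lam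
      rw [mBowen]
      have hPre : ∀ k, mPre T U (∅ : Set (AddCircle (1:ℝ))) lam k =
          (if lam < 0 then ⊤ else if lam = 0 then 1 else 0) := by
        intro k; rw [mPre, if_pos rfl]
      simp only [hPre, iSup_const]
      constructor
      · intro h
        by_contra hl
        push_neg at hl
        rcases lt_or_eq_of_le hl with h2 | h2
        · rw [if_pos h2] at h; exact absurd h (by simp)
        · rw [if_neg (by rw [h2]; exact lt_irrefl 0), if_pos h2] at h
          exact absurd h (by simp)
      · intro h
        rw [if_neg (by linarith), if_neg h.ne']
    refine le_antisymm ?_ ?_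
    · have hU1 : IsFinOpenCover ({Set.univ} : Finset (Set (AddCircle (1:ℝ)))) := by
        constructor
        · intro u hu; rw [Finset.mem_singleton] at hu; rw [hu]; exact isOpen_univ
        · simp
      refine le_trans ?_ (le_iSup₂ (f := fun U (_ : IsFinOpenCover U) => bowenEntropyOf T U ∅)
        {Set.univ} hU1)
      rw [bowenEntropyOf]
      refine le_iInf₂ fun lam hlam => ?_
      have hpos := (hmB _ lam).1 hlam
      exact_mod_cast hpos.le
    · rw [bowenEntropy]
      refine iSup₂_le fun U hU => ?_
      rw [bowenEntropyOf]
      apply ereal_le_coe_of_forall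
      intro c hc
      exact iInf₂_le c ((hmB U c).2 hc)
  · refine le_antisymm ?_ ?_
    · obtain ⟨U₀, hU₀, hU₀small'⟩ := exists_ball_cover (δ₀ := 1/(8*(m:ℝ))) (by positivity)
      have hU₀small : ∀ u ∈ U₀, ∀ x ∈ u, ∀ y ∈ u, dist x y ≤ 1/(4*(m:ℝ)) := by
        intro u hu x hx y hy
        calc dist x y ≤ 2*(1/(8*(m:ℝ))) := hU₀small' u hu x hx y hy
          _ = 1/(4*m) := by ring
      refine le_trans ?_ (le_iSup₂ (f := fun U (_ : IsFinOpenCover U) => bowenEntropyOf T U C)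
        U₀ hU₀)
      rw [bowenEntropyOf]
      refine le_iInf₂ fun lam hlam => ?_
      have hlam0 : 0 < lam := pos_of_mBowen_eq_zero hC hlam
      have hμ := hausdorffMeasure_eq_zero_of_mBowen hm hC hU₀small hlam0 hlam
      set t : ℝ := lam / Real.log m with htdef
      have htpos : 0 < t := div_pos hlam0 hlog
      have hdim : dimH C ≤ ENNReal.ofReal t := by
        have h6 : μH[((t.toNNReal : NNReal) : ℝ)] C = 0 := by
          rw [Real.coe_toNNReal _ htpos.le]; exact hμ
        have h7 := dimH_le_of_hausdorffMeasure_ne_top (d := t.toNNReal)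
          (by rw [h6]; exact ENNReal.zero_ne_top)
        exact h7
      have h8 : (dimH C).toReal ≤ t := by
        calc (dimH C).toReal ≤ (ENNReal.ofReal t).toReal :=
              ENNReal.toReal_mono ENNReal.ofReal_ne_top hdim
          _ = t := ENNReal.toReal_ofReal htpos.le
      have hd₀lam : d₀ ≤ lam := by
        rw [hd₀]
        calc (dimH C).toReal * Real.log m ≤ t * Real.log m :=
              mul_le_mul_of_nonneg_right h8 hlog.le
          _ = lam := div_mul_cancel₀ _ hlog.ne'
      exact_mod_cast hd₀lam
    · apply ereal_le_coe_of_forall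
      intro lam hlam
      have hlam0 : 0 < lam := lt_of_le_of_lt hd₀0 hlam
      rw [bowenEntropy]
      refine iSup₂_le fun U hU => ?_
      set t : ℝ := lam / Real.log m with htdef
      have htpos : 0 < t := div_pos hlam0 hlog
      have hdim : dimH C < ENNReal.ofReal t := by
        rw [ENNReal.lt_ofReal_iff_toReal_lt hdtop, htdef, lt_div_iff₀ hlog]
        exact hlam
      have hμ : μH[t] C = 0 := by
        have h6 := hausdorffMeasure_of_dimH_lt (d := t.toNNReal) hdim
        rwa [Real.coe_toNNReal _ htpos.le] at h6
      have hmB := mBowen_eq_zero hm hC hU hlam0 hμ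
      rw [bowenEntropyOf]
      exact iInf₂_le lam hmB

end Lowering
end
end

section
/- Let (X_i, T_i), i ∈ ℕ, be topological dynamical systems and let (Y,S) = ∏_{i∈ℕ} (X_i, T_i) be the product system with π_i : Y → X_i the i-th projection. Then for each closed subset K ⊆ Y and each j ∈ ℕ, h(T_j, π_j K) ≤ h(S, K) ≤ Σ_{i∈ℕ} h(T_i, π_i K). -/
open Set Filter MeasureTheory
open scoped Classical ENNReal

noncomputable section

namespace Lowering

variable {X : Type*} [TopologicalSpace X]

section AuxBasic
set_option linter.unusedSectionVars false

variable {X : Type*}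

lemma coverNum_empty (V : Set (Set X)) : coverNum V (∅ : Set X) = 1 := if_pos rfl

lemma coverNum_le_card {V : Set (Set X)} {K : Set X} (hK : K ≠ ∅) {F : Finset (Set X)}
    (hF : ↑F ⊆ V) (hc : K ⊆ ⋃₀ (F : Set (Set X))) : coverNum V K ≤ F.card := by
  rw [coverNum, if_neg hK]
  exact Nat.sInf_le ⟨F, hF, hc, rfl⟩

lemma coverNum_spec {V : Set (Set X)} {K : Set X} (hK : K ≠ ∅)
    (hex : ∃ F : Finset (Set X), ↑F ⊆ V ∧ K ⊆ ⋃₀ (F : Set (Set X))) :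
    ∃ F : Finset (Set X), ↑F ⊆ V ∧ K ⊆ ⋃₀ (F : Set (Set X)) ∧ F.card = coverNum V K := by
  rw [coverNum, if_neg hK]
  obtain ⟨F, h1, h2⟩ := hex
  have hne : {n : ℕ | ∃ F : Finset (Set X), ↑F ⊆ V ∧ K ⊆ ⋃₀ (F : Set (Set X)) ∧
      F.card = n}.Nonempty := ⟨F.card, F, h1, h2, rfl⟩
  obtain ⟨F', h⟩ := Nat.sInf_mem hne
  exact ⟨F', h.1, h.2.1, h.2.2⟩

lemma one_le_coverNum {V : Set (Set X)} {K : Set X}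
    (hex : ∃ F : Finset (Set X), ↑F ⊆ V ∧ K ⊆ ⋃₀ (F : Set (Set X))) : 1 ≤ coverNum V K := by
  by_cases hK : K = ∅
  · rw [hK, coverNum_empty]
  · obtain ⟨F, _, hc, hcard⟩ := coverNum_spec hK hex
    obtain ⟨x, hx⟩ := Set.nonempty_iff_ne_empty.2 hK
    obtain ⟨W, hW, -⟩ := hc hx
    rw [← hcard]
    exact Finset.card_pos.2 ⟨W, hW⟩

lemma log_nat_mono {m n : ℕ} (h : m ≤ n) : Real.log m ≤ Real.log n := by
  rcases Nat.eq_zero_or_pos m with rfl | hm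
  · simpa using Real.log_natCast_nonneg n
  · exact Real.log_le_log (by exact_mod_cast hm) (by exact_mod_cast h)

lemma exists_dynRefine_cover [TopologicalSpace X] (T : X → X) {U : Finset (Set X)} (hU : IsFinOpenCover U)
    (n : ℕ) (K : Set X) :
    ∃ F : Finset (Set X), ↑F ⊆ dynRefine T ↑U n ∧ K ⊆ ⋃₀ (F : Set (Set X)) := by
  classical
  set ext : (∀ i ∈ Finset.range n, Set X) → (ℕ → Set X) :=
    fun c i => if h : i ∈ Finset.range n then c i h else ∅ with hext
  refine ⟨((Finset.range n).pi fun _ => U).image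
    (fun c => ⋂ i ∈ Finset.range n, T^[i] ⁻¹' ext c i), ?_, ?_⟩
  · intro W hW
    rw [Finset.mem_coe, Finset.mem_image] at hW
    obtain ⟨c, hc, rfl⟩ := hW
    refine ⟨ext c, fun i hi => ?_, rfl⟩
    have hi' : i ∈ Finset.range n := Finset.mem_range.2 hi
    simp only [hext, dif_pos hi']
    exact Finset.mem_pi.1 hc i hi'
  · intro x _
    have hmem : ∀ i : ℕ, ∃ u ∈ U, T^[i] x ∈ u := by
      intro i
      have : T^[i] x ∈ ⋃₀ (U : Set (Set X)) := hU.2 ▸ Set.mem_univ _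
      obtain ⟨u, hu, hxu⟩ := this
      exact ⟨u, hu, hxu⟩
    choose u hu hxu using hmem
    refine Set.mem_sUnion.2 ⟨_, Finset.mem_coe.2 (Finset.mem_image.2
      ⟨fun i _ => u i, Finset.mem_pi.2 fun i _ => hu i, rfl⟩), ?_⟩
    simp only [Set.mem_iInter]
    intro i hi
    simp only [hext, dif_pos hi, Set.mem_preimage]
    exact hxu i

end AuxBasic
section AuxMap
set_option linter.unusedSectionVars false

variable {X : Type*} [TopologicalSpace X]

lemma coverNum_le_of_map {X' : Type*} (pr : X → X')
    {V₁ : Set (Set X')} {V₂ : Set (Set X)} {K : Set X}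
    (h : ∀ W ∈ V₂, ∃ W' ∈ V₁, W ⊆ pr ⁻¹' W')
    (hex : ∃ F : Finset (Set X), ↑F ⊆ V₂ ∧ K ⊆ ⋃₀ (F : Set (Set X))) :
    coverNum V₁ (pr '' K) ≤ coverNum V₂ K := by
  classical
  by_cases hK : K = ∅
  · rw [hK, Set.image_empty, coverNum_empty, coverNum_empty]
  have hK' : pr '' K ≠ ∅ := by
    simpa [Set.image_eq_empty] using hK
  obtain ⟨F, hF, hc, hcard⟩ := coverNum_spec hK hex
  set Φ : Set X → Set X' := fun W => if hw : W ∈ V₂ then (h W hw).choose else ∅ with hΦ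
  have hΦspec : ∀ W ∈ V₂, Φ W ∈ V₁ ∧ W ⊆ pr ⁻¹' Φ W := by
    intro W hw
    simp only [hΦ, dif_pos hw]
    exact ⟨(h W hw).choose_spec.1, (h W hw).choose_spec.2⟩
  rw [← hcard]
  refine le_trans (coverNum_le_card hK' (F := F.image Φ) ?_ ?_) Finset.card_image_le
  · intro W' hW'
    rw [Finset.coe_image] at hW'
    obtain ⟨W, hW, rfl⟩ := hW'
    exact (hΦspec W (hF hW)).1
  · rintro _ ⟨x, hx, rfl⟩
    obtain ⟨W, hW, hxW⟩ := hc hx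
    exact ⟨Φ W, Finset.mem_coe.2 (Finset.mem_image.2 ⟨W, Finset.mem_coe.1 hW, rfl⟩),
      (hΦspec W (hF hW)).2 hxW⟩

lemma coverEntropy_empty (T : X → X) : coverEntropy T (∅ : Set X) = 0 := by
  have h0 : ∀ U : Finset (Set X), coverEntropyOf T U (∅ : Set X) = 0 := by
    intro U
    have : (fun n : ℕ => ((Real.log (coverNum (dynRefine T (↑U) n) (∅ : Set X)) / n : ℝ) : EReal))
        = fun _ : ℕ => (0 : EReal) := by
      funext n
      simp [coverNum_empty]
    rw [coverEntropyOf, this, limsup_const]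
  apply le_antisymm
  · exact iSup₂_le fun U hU => (h0 U).le
  · refine le_trans ?_ (le_iSup₂ (f := fun U (_ : IsFinOpenCover U) => coverEntropyOf T U (∅ : Set X))
      ({Set.univ} : Finset (Set X)) ?_)
    · rw [h0]
    · constructor
      · intro u hu
        simp only [Finset.mem_singleton] at hu
        simp [hu]
      · simp

lemma limsup_logdiv_mono {a b : ℕ → ℕ} (h : ∀ n, a n ≤ b n) :
    Filter.atTop.limsup (fun n : ℕ => ((Real.log (a n) / n : ℝ) : EReal)) ≤
    Filter.atTop.limsup (fun n : ℕ => ((Real.log (b n) / n : ℝ) : EReal)) := by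
  refine limsup_le_limsup (Filter.Eventually.of_forall fun n => ?_)
  apply EReal.coe_le_coe_iff.2
  exact div_le_div_of_nonneg_right (log_nat_mono (h n)) (Nat.cast_nonneg n)

lemma zero_le_limsup_coe {g : ℕ → ℝ} (hg : ∀ n, 0 ≤ g n) :
    (0 : EReal) ≤ Filter.atTop.limsup (fun n => ((g n : ℝ) : EReal)) := by
  have := limsup_le_limsup (f := (Filter.atTop : Filter ℕ))
    (u := fun _ : ℕ => (0 : EReal)) (v := fun n => ((g n : ℝ) : EReal))
    (Filter.Eventually.of_forall fun n => by
      show (0 : EReal) ≤ ((g n : ℝ) : EReal)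
      exact_mod_cast hg n)
  simpa [limsup_const] using this

lemma limsup_coe_sum_le {ι : Type*} (s : Finset ι) (f : ι → ℕ → ℝ)
    (hf : ∀ i ∈ s, ∀ n, 0 ≤ f i n) :
    Filter.atTop.limsup (fun n : ℕ => ((∑ i ∈ s, f i n : ℝ) : EReal)) ≤
      ∑ i ∈ s, Filter.atTop.limsup (fun n : ℕ => ((f i n : ℝ) : EReal)) := by
  classical
  induction s using Finset.cons_induction with
  | empty => simp [limsup_const]
  | cons a s ha ih =>
    have hfa : ∀ n, 0 ≤ f a n := hf a (Finset.mem_cons_self a s)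
    have hfs : ∀ i ∈ s, ∀ n, 0 ≤ f i n := fun i hi => hf i (Finset.mem_cons_of_mem hi)
    have hsum : ∀ n, 0 ≤ ∑ i ∈ s, f i n := fun n => Finset.sum_nonneg fun i hi => hfs i hi n
    have hne1 : Filter.atTop.limsup (fun n : ℕ => ((f a n : ℝ) : EReal)) ≠ ⊥ := by
      intro hbot
      have := zero_le_limsup_coe hfa
      rw [hbot] at this
      exact absurd this (by simp)
    have hne2 : Filter.atTop.limsup (fun n : ℕ => ((∑ i ∈ s, f i n : ℝ) : EReal)) ≠ ⊥ := by
      intro hbot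
      have := zero_le_limsup_coe hsum
      rw [hbot] at this
      exact absurd this (by simp)
    simp only [Finset.sum_cons]
    have heq : (fun n : ℕ => ((f a n + ∑ i ∈ s, f i n : ℝ) : EReal))
        = (fun n : ℕ => ((f a n : ℝ) : EReal)) + (fun n : ℕ => ((∑ i ∈ s, f i n : ℝ) : EReal)) := by
      funext n
      exact EReal.coe_add _ _
    calc Filter.atTop.limsup (fun n : ℕ => ((f a n + ∑ i ∈ s, f i n : ℝ) : EReal))
        ≤ Filter.atTop.limsup (fun n : ℕ => ((f a n : ℝ) : EReal))
            + Filter.atTop.limsup (fun n : ℕ => ((∑ i ∈ s, f i n : ℝ) : EReal)) := by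
          rw [heq]
          exact EReal.limsup_add_le (Or.inl hne1) (Or.inr hne2)
      _ ≤ _ := add_le_add le_rfl (ih hfs)

end AuxMap
section Part1
set_option linter.unusedSectionVars false

variable {Xf : ℕ → Type*} [∀ i, TopologicalSpace (Xf i)]

lemma pi_iterate (T : ∀ i, Xf i → Xf i) (n : ℕ) (x : ∀ i, Xf i) (i : ℕ) :
    (fun (x : ∀ i, Xf i) (i : ℕ) => T i (x i))^[n] x i = (T i)^[n] (x i) := by
  induction n generalizing x with
  | zero => simp
  | succ m ih =>
    rw [Function.iterate_succ_apply, Function.iterate_succ_apply]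
    exact ih _

lemma dynRefine_proj (T : ∀ i, Xf i → Xf i) (j : ℕ) {U : Finset (Set (Xf j))} (n : ℕ)
    {W : Set (∀ i, Xf i)}
    (hW : W ∈ dynRefine (fun (x : ∀ i, Xf i) (i : ℕ) => T i (x i))
      ↑(U.image fun u => (fun x : ∀ i, Xf i => x j) ⁻¹' u) n) :
    ∃ W' ∈ dynRefine (T j) ↑U n, W ⊆ (fun x : ∀ i, Xf i => x j) ⁻¹' W' := by
  classical
  obtain ⟨f, hf, rfl⟩ := hW
  have hg : ∀ t, t < n → ∃ g ∈ U, (fun x : ∀ i, Xf i => x j) ⁻¹' g = f t := by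
    intro t ht
    have := hf t ht
    rw [Finset.mem_coe, Finset.mem_image] at this
    obtain ⟨g, hg, hgeq⟩ := this
    exact ⟨g, hg, hgeq⟩
  choose g hgU hgeq using hg
  set g' : ℕ → Set (Xf j) := fun t => if h : t < n then g t h else ∅ with hg'
  refine ⟨⋂ t ∈ Finset.range n, (T j)^[t] ⁻¹' g' t, ⟨g', fun t ht => ?_, rfl⟩, ?_⟩
  · simp only [hg', dif_pos ht]
    exact Finset.mem_coe.2 (hgU t ht)
  · intro y hy
    simp only [Set.mem_preimage, Set.mem_iInter] at hy ⊢
    intro t ht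
    rw [Finset.mem_range] at ht
    have h1 := hy t (Finset.mem_range.2 ht)
    rw [← hgeq t ht] at h1
    simp only [Set.mem_preimage] at h1
    simp only [hg', dif_pos ht, Set.mem_preimage]
    rw [← pi_iterate T t _ j]
    exact h1

lemma part1 (T : ∀ i, Xf i → Xf i) (K : Set (∀ i, Xf i)) (j : ℕ) :
    coverEntropy (T j) ((fun x => x j) '' K) ≤
      coverEntropy (fun (x : ∀ i, Xf i) (i : ℕ) => T i (x i)) K := by
  refine iSup₂_le fun U hU => ?_
  classical
  set U' : Finset (Set (∀ i, Xf i)) := U.image fun u => (fun x : ∀ i, Xf i => x j) ⁻¹' u with hU'def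
  have hU' : IsFinOpenCover U' := by
    constructor
    · intro u hu
      rw [hU'def, Finset.mem_image] at hu
      obtain ⟨v, hv, rfl⟩ := hu
      exact (hU.1 v hv).preimage (continuous_apply j)
    · apply Set.eq_univ_of_forall
      intro x
      have : x j ∈ ⋃₀ (U : Set (Set (Xf j))) := hU.2 ▸ Set.mem_univ _
      obtain ⟨u, hu, hxu⟩ := this
      exact ⟨(fun x : ∀ i, Xf i => x j) ⁻¹' u,
        Finset.mem_coe.2 (Finset.mem_image.2 ⟨u, Finset.mem_coe.1 hu, rfl⟩), hxu⟩
  have hcn : ∀ n, coverNum (dynRefine (T j) ↑U n) ((fun x => x j) '' K) ≤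
      coverNum (dynRefine (fun (x : ∀ i, Xf i) (i : ℕ) => T i (x i)) ↑U' n) K := by
    intro n
    exact coverNum_le_of_map (fun x : ∀ i, Xf i => x j)
      (fun W hW => dynRefine_proj T j n hW)
      (exists_dynRefine_cover _ hU' n K)
  refine le_trans ?_ (le_iSup₂ (f := fun U (_ : IsFinOpenCover U) =>
    coverEntropyOf (fun (x : ∀ i, Xf i) (i : ℕ) => T i (x i)) U K) U' hU')
  exact limsup_logdiv_mono hcn

end Part1
section Box
set_option linter.unusedSectionVars false

variable {Xf : ℕ → Type*} [∀ i, TopologicalSpace (Xf i)]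

lemma exists_box_refinement [∀ i, CompactSpace (Xf i)] [Nonempty (∀ i, Xf i)]
    {U : Finset (Set (∀ i, Xf i))} (hU : IsFinOpenCover U) :
    ∃ (N : ℕ) (V : ∀ i : ℕ, Finset (Set (Xf i))), (∀ i, IsFinOpenCover (V i)) ∧
      ∀ v : ∀ i, Set (Xf i), (∀ i < N, v i ∈ V i) →
        ∃ u ∈ U, ⋂ i ∈ Finset.range N, (fun x : ∀ i, Xf i => x i) ⁻¹' (v i) ⊆ u := by
  classical
  have h1 : ∀ y : ∀ i, Xf i, ∃ (u : Set (∀ i, Xf i)) (I : Finset ℕ) (O : ∀ i, Set (Xf i)),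
      u ∈ U ∧ (∀ i, IsOpen (O i)) ∧ (∀ i, y i ∈ O i) ∧ (↑I : Set ℕ).pi O ⊆ u := by
    intro y
    have : y ∈ ⋃₀ (U : Set (Set (∀ i, Xf i))) := hU.2 ▸ Set.mem_univ _
    obtain ⟨u, huU, hyu⟩ := this
    obtain ⟨I, O, hIO, hsub⟩ := isOpen_pi_iff.1 (hU.1 u huU) y hyu
    refine ⟨u, I, fun i => if i ∈ I then O i else Set.univ, huU, ?_, ?_, ?_⟩
    · intro i
      by_cases hi : i ∈ I
      · simpa [hi] using (hIO i hi).1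
      · simp [hi]
    · intro i
      by_cases hi : i ∈ I
      · simpa [hi] using (hIO i hi).2
      · simp [hi]
    · intro x hx
      apply hsub
      intro i hi
      have hi' : i ∈ I := hi
      have := hx i hi
      simpa [if_pos hi'] using this
  choose uf If Of huU hOopen hyO hsub using h1
  have hopen : ∀ y : ∀ i, Xf i, IsOpen ((↑(If y) : Set ℕ).pi (Of y)) :=
    fun y => isOpen_set_pi (If y).finite_toSet (fun i _ => hOopen y i)
  have hcov : Set.univ ⊆ ⋃ y : ∀ i, Xf i, (↑(If y) : Set ℕ).pi (Of y) :=
    fun x _ => Set.mem_iUnion.2 ⟨x, fun i _ => hyO x i⟩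
  obtain ⟨t, ht⟩ := isCompact_univ.elim_finite_subcover
    (fun y : ∀ i, Xf i => (↑(If y) : Set ℕ).pi (Of y)) hopen hcov
  set N : ℕ := t.sup (fun y => (If y).sup (· + 1)) with hN
  have hNlt : ∀ y ∈ t, ∀ i ∈ If y, i < N := by
    intro y hy i hi
    have h2 : i + 1 ≤ (If y).sup (· + 1) := Finset.le_sup (f := (· + 1)) hi
    have h3 : (If y).sup (· + 1) ≤ N := Finset.le_sup (f := fun y => (If y).sup (· + 1)) hy
    omega
  set V : ∀ i : ℕ, Finset (Set (Xf i)) := fun i =>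
    (t.powerset.filter (fun s => ∃ x : Xf i, ∀ y ∈ t, (y ∈ s ↔ x ∈ Of y i))).image
      (fun s => ⋂ y ∈ s, Of y i) with hV
  refine ⟨N, V, ?_, ?_⟩
  · intro i
    constructor
    · intro v hv
      rw [hV, Finset.mem_image] at hv
      obtain ⟨s, _, rfl⟩ := hv
      exact isOpen_biInter_finset fun y _ => hOopen y i
    · apply Set.eq_univ_of_forall
      intro x
      refine ⟨⋂ y ∈ t.filter (fun y => x ∈ Of y i), Of y i, ?_, ?_⟩
      · apply Finset.mem_coe.2
        rw [hV, Finset.mem_image]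
        refine ⟨t.filter (fun y => x ∈ Of y i), ?_, rfl⟩
        rw [Finset.mem_filter]
        exact ⟨Finset.mem_powerset.2 (Finset.filter_subset _ t),
          ⟨x, fun y hy => by simp [Finset.mem_filter, hy]⟩⟩
      · exact Set.mem_iInter₂.2 fun y hy => (Finset.mem_filter.1 hy).2
  · intro v hv
    have h2 : ∀ i, i < N → ∃ (s : Finset (∀ j, Xf j)) (x : Xf i), s ⊆ t ∧
        (∀ y ∈ t, (y ∈ s ↔ x ∈ Of y i)) ∧ v i = ⋂ y ∈ s, Of y i := by
      intro i hi
      have := hv i hi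
      rw [hV, Finset.mem_image] at this
      obtain ⟨s, hs, heq⟩ := this
      rw [Finset.mem_filter] at hs
      obtain ⟨x, hx⟩ := hs.2
      exact ⟨s, x, Finset.mem_powerset.1 hs.1, hx, heq.symm⟩
    choose sf xf hsf hiff hveq using h2
    rcases Set.eq_empty_or_nonempty (⋂ i ∈ Finset.range N,
        (fun x : ∀ i, Xf i => x i) ⁻¹' (v i)) with hP | ⟨z, hz⟩
    · obtain ⟨y⟩ : Nonempty (∀ i, Xf i) := inferInstance
      have : y ∈ ⋃₀ (U : Set (Set (∀ i, Xf i))) := hU.2 ▸ Set.mem_univ _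
      obtain ⟨u, hu, -⟩ := this
      exact ⟨u, hu, by rw [hP]; exact Set.empty_subset u⟩
    · set w : ∀ j, Xf j := fun j => if h : j < N then xf j h else z j with hw
      have hwmem : w ∈ ⋃ y ∈ t, (↑(If y) : Set ℕ).pi (Of y) := ht (Set.mem_univ w)
      obtain ⟨y₀, hy₀t, hwpi⟩ := Set.mem_iUnion₂.1 hwmem
      refine ⟨uf y₀, huU y₀, ?_⟩
      refine Set.Subset.trans ?_ (hsub y₀)
      intro p hp
      intro i hi
      have hiN : i < N := hNlt y₀ hy₀t i hi
      have hwi : w i ∈ Of y₀ i := hwpi i hi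
      rw [hw] at hwi
      simp only [dif_pos hiN] at hwi
      have hy₀s : y₀ ∈ sf i hiN := (hiff i hiN y₀ hy₀t).2 hwi
      have hpv : p i ∈ v i := by
        have := Set.mem_iInter₂.1 hp i (Finset.mem_range.2 hiN)
        exact this
      rw [hveq i hiN] at hpv
      exact Set.mem_iInter₂.1 hpv y₀ hy₀s

end Box
section Prod
set_option linter.unusedSectionVars false

variable {Xf : ℕ → Type*} [∀ i, TopologicalSpace (Xf i)]

lemma dynRefine_box (T : ∀ i, Xf i → Xf i) {U : Finset (Set (∀ i, Xf i))} {N : ℕ}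
    {V : ∀ i : ℕ, Finset (Set (Xf i))}
    (hbox : ∀ v : ∀ i, Set (Xf i), (∀ i < N, v i ∈ V i) →
      ∃ u ∈ U, ⋂ i ∈ Finset.range N, (fun x : ∀ i, Xf i => x i) ⁻¹' (v i) ⊆ u)
    (n : ℕ) (c : ∀ i, Set (Xf i)) (hc : ∀ i < N, c i ∈ dynRefine (T i) ↑(V i) n) :
    ∃ W ∈ dynRefine (fun (x : ∀ i, Xf i) (i : ℕ) => T i (x i)) ↑U n,
      ⋂ i ∈ Finset.range N, (fun x : ∀ i, Xf i => x i) ⁻¹' (c i) ⊆ W := by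
  classical
  have h3 : ∀ i, i < N → ∃ f : ℕ → Set (Xf i), (∀ t < n, f t ∈ (V i : Set (Set (Xf i)))) ∧
      c i = ⋂ t ∈ Finset.range n, (T i)^[t] ⁻¹' f t := hc
  choose f hfV hceq using h3
  have h4 : ∀ t, t < n → ∃ u ∈ U,
      ⋂ i ∈ Finset.range N, (fun x : ∀ i, Xf i => x i) ⁻¹'
        ((fun i => if h : i < N then f i h t else Set.univ) i) ⊆ u := by
    intro t ht
    apply hbox
    intro i hi
    simp only [dif_pos hi]
    exact Finset.mem_coe.1 (hfV i hi t ht)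
  choose uu huU hsubu using h4
  set g : ℕ → Set (∀ i, Xf i) := fun t => if h : t < n then uu t h else ∅ with hg
  refine ⟨⋂ t ∈ Finset.range n, (fun (x : ∀ i, Xf i) (i : ℕ) => T i (x i))^[t] ⁻¹' g t,
    ⟨g, fun t ht => ?_, rfl⟩, ?_⟩
  · simp only [hg, dif_pos ht]
    exact Finset.mem_coe.2 (huU t ht)
  · intro p hp
    simp only [Set.mem_iInter, Set.mem_preimage] at hp ⊢
    intro t ht
    rw [Finset.mem_range] at ht
    simp only [hg, dif_pos ht]
    apply hsubu t ht
    simp only [Set.mem_iInter, Set.mem_preimage]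
    intro i hi
    rw [Finset.mem_range] at hi
    simp only [dif_pos hi]
    have hpc : p i ∈ c i := hp i (Finset.mem_range.2 hi)
    rw [hceq i hi] at hpc
    have := Set.mem_iInter₂.1 hpc t (Finset.mem_range.2 ht)
    simp only [Set.mem_preimage] at this
    rw [pi_iterate T t p i]
    exact this

lemma coverNum_prod (T : ∀ i, Xf i → Xf i) {U : Finset (Set (∀ i, Xf i))} {N : ℕ}
    {V : ∀ i : ℕ, Finset (Set (Xf i))} (hV : ∀ i, IsFinOpenCover (V i))
    (hbox : ∀ v : ∀ i, Set (Xf i), (∀ i < N, v i ∈ V i) →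
      ∃ u ∈ U, ⋂ i ∈ Finset.range N, (fun x : ∀ i, Xf i => x i) ⁻¹' (v i) ⊆ u)
    (K : Set (∀ i, Xf i)) (n : ℕ) :
    coverNum (dynRefine (fun (x : ∀ i, Xf i) (i : ℕ) => T i (x i)) ↑U n) K ≤
      ∏ i ∈ Finset.range N, coverNum (dynRefine (T i) ↑(V i) n) ((fun x => x i) '' K) := by
  classical
  by_cases hK : K = ∅
  · rw [hK, coverNum_empty]
    refine Finset.one_le_prod' fun i _ => ?_
    rw [Set.image_empty, coverNum_empty]
  have hKi : ∀ i : ℕ, (fun x : ∀ i, Xf i => x i) '' K ≠ ∅ := fun i => by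
    simpa [Set.image_eq_empty] using hK
  have h5 : ∀ i : ℕ, ∃ F : Finset (Set (Xf i)), ↑F ⊆ dynRefine (T i) ↑(V i) n ∧
      ((fun x : ∀ i, Xf i => x i) '' K) ⊆ ⋃₀ (F : Set (Set (Xf i))) ∧
      F.card = coverNum (dynRefine (T i) ↑(V i) n) ((fun x : ∀ i, Xf i => x i) '' K) :=
    fun i => coverNum_spec (hKi i) (exists_dynRefine_cover (T i) (hV i) n _)
  choose Fc hFc hFcov hFcard using h5
  set D : (∀ i, Set (Xf i)) → Set (∀ i, Xf i) := fun c =>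
    if h : ∀ i < N, c i ∈ dynRefine (T i) ↑(V i) n then (dynRefine_box T hbox n c h).choose
    else Set.univ with hD
  have hDspec : ∀ c (h : ∀ i < N, c i ∈ dynRefine (T i) ↑(V i) n),
      D c ∈ dynRefine (fun (x : ∀ i, Xf i) (i : ℕ) => T i (x i)) ↑U n ∧
      ⋂ i ∈ Finset.range N, (fun x : ∀ i, Xf i => x i) ⁻¹' (c i) ⊆ D c := by
    intro c h
    simp only [hD, dif_pos h]
    exact ⟨(dynRefine_box T hbox n c h).choose_spec.1, (dynRefine_box T hbox n c h).choose_spec.2⟩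
  set ext : (∀ i ∈ Finset.range N, Set (Xf i)) → (∀ i, Set (Xf i)) :=
    fun c i => if h : i ∈ Finset.range N then c i h else Set.univ with hext
  have hextmem : ∀ c ∈ (Finset.range N).pi (fun i => Fc i),
      ∀ i < N, ext c i ∈ dynRefine (T i) ↑(V i) n := by
    intro c hc i hi
    have hi' : i ∈ Finset.range N := Finset.mem_range.2 hi
    simp only [hext, dif_pos hi']
    exact hFc i (Finset.mem_pi.1 hc i hi')
  set F : Finset (Set (∀ i, Xf i)) :=
    ((Finset.range N).pi (fun i => Fc i)).image (fun c => D (ext c)) with hF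
  have hsub : ↑F ⊆ dynRefine (fun (x : ∀ i, Xf i) (i : ℕ) => T i (x i)) ↑U n := by
    intro W hW
    rw [hF, Finset.coe_image] at hW
    obtain ⟨c, hc, rfl⟩ := hW
    exact (hDspec (ext c) (hextmem c (Finset.mem_coe.1 hc))).1
  have hcover : K ⊆ ⋃₀ (F : Set (Set (∀ i, Xf i))) := by
    intro p hp
    have h6 : ∀ i : ℕ, ∃ w, w ∈ Fc i ∧ p i ∈ w := by
      intro i
      obtain ⟨w, hw, hpw⟩ := hFcov i ⟨p, hp, rfl⟩
      exact ⟨w, Finset.mem_coe.1 hw, hpw⟩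
    choose wf hwF hpw using h6
    have hcpi : (fun i (_ : i ∈ Finset.range N) => wf i) ∈ (Finset.range N).pi (fun i => Fc i) :=
      Finset.mem_pi.2 fun i _ => hwF i
    refine ⟨D (ext (fun i _ => wf i)), Finset.mem_coe.2 (Finset.mem_image.2
      ⟨fun i _ => wf i, hcpi, rfl⟩), ?_⟩
    apply (hDspec (ext (fun i _ => wf i)) (hextmem _ hcpi)).2
    simp only [Set.mem_iInter, Set.mem_preimage]
    intro i hi
    simp only [hext, dif_pos hi]
    exact hpw i
  calc coverNum (dynRefine (fun (x : ∀ i, Xf i) (i : ℕ) => T i (x i)) ↑U n) K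
      ≤ F.card := coverNum_le_card hK hsub hcover
    _ ≤ ((Finset.range N).pi (fun i => Fc i)).card := Finset.card_image_le
    _ = ∏ i ∈ Finset.range N, (Fc i).card := Finset.card_pi _ _
    _ = _ := Finset.prod_congr rfl fun i _ => hFcard i

end Prod
section Part2
set_option linter.unusedSectionVars false

variable {Xf : ℕ → Type*} [∀ i, TopologicalSpace (Xf i)]

lemma part2 [∀ i, CompactSpace (Xf i)] (T : ∀ i, Xf i → Xf i) (K : Set (∀ i, Xf i)) :
    coverEntropy (fun (x : ∀ i, Xf i) (i : ℕ) => T i (x i)) K ≤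
      ⨆ N : ℕ, ∑ i ∈ Finset.range N, coverEntropy (T i) ((fun x => x i) '' K) := by
  rcases isEmpty_or_nonempty (∀ i, Xf i) with hE | hNE
  · have hK : K = ∅ := Set.eq_empty_of_isEmpty K
    rw [hK, coverEntropy_empty]
    refine le_trans ?_ (le_iSup (fun N => ∑ i ∈ Finset.range N,
      coverEntropy (T i) ((fun x : ∀ i, Xf i => x i) '' (∅ : Set (∀ i, Xf i)))) 0)
    simp
  refine iSup₂_le fun U hU => ?_
  obtain ⟨N, V, hV, hbox⟩ := exists_box_refinement hU
  have hone : ∀ (i : ℕ) (n : ℕ),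
      1 ≤ coverNum (dynRefine (T i) ↑(V i) n) ((fun x : ∀ i, Xf i => x i) '' K) :=
    fun i n => one_le_coverNum (exists_dynRefine_cover (T i) (hV i) n _)
  have key : ∀ n : ℕ,
      Real.log (coverNum (dynRefine (fun (x : ∀ i, Xf i) (i : ℕ) => T i (x i)) ↑U n) K) / n ≤
      ∑ i ∈ Finset.range N,
        Real.log (coverNum (dynRefine (T i) ↑(V i) n) ((fun x : ∀ i, Xf i => x i) '' K)) / n := by
    intro n
    rw [← Finset.sum_div]
    refine div_le_div_of_nonneg_right ?_ (Nat.cast_nonneg n)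
    refine le_trans (log_nat_mono (coverNum_prod T hV hbox K n)) (le_of_eq ?_)
    rw [Nat.cast_prod, Real.log_prod
      (fun i _ => Nat.cast_ne_zero.2 (Nat.one_le_iff_ne_zero.1 (hone i n)))]
  calc coverEntropyOf (fun (x : ∀ i, Xf i) (i : ℕ) => T i (x i)) U K
      ≤ Filter.atTop.limsup (fun n : ℕ => ((∑ i ∈ Finset.range N,
          Real.log (coverNum (dynRefine (T i) ↑(V i) n)
            ((fun x : ∀ i, Xf i => x i) '' K)) / n : ℝ) : EReal)) := by
        refine limsup_le_limsup (Filter.Eventually.of_forall fun n => ?_)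
        exact EReal.coe_le_coe_iff.2 (key n)
    _ ≤ ∑ i ∈ Finset.range N, Filter.atTop.limsup (fun n : ℕ =>
          ((Real.log (coverNum (dynRefine (T i) ↑(V i) n)
            ((fun x : ∀ i, Xf i => x i) '' K)) / n : ℝ) : EReal)) := by
        refine limsup_coe_sum_le (Finset.range N) _ fun i _ n => ?_
        exact div_nonneg (Real.log_natCast_nonneg _) (Nat.cast_nonneg n)
    _ = ∑ i ∈ Finset.range N, coverEntropyOf (T i) (V i) ((fun x : ∀ i, Xf i => x i) '' K) := rfl
    _ ≤ ∑ i ∈ Finset.range N, coverEntropy (T i) ((fun x : ∀ i, Xf i => x i) '' K) := by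
        refine Finset.sum_le_sum fun i _ => ?_
        exact le_iSup₂ (f := fun W (_ : IsFinOpenCover W) =>
          coverEntropyOf (T i) W ((fun x : ∀ i, Xf i => x i) '' K)) (V i) (hV i)
    _ ≤ _ := le_iSup (fun N => ∑ i ∈ Finset.range N,
          coverEntropy (T i) ((fun x : ∀ i, Xf i => x i) '' K)) N

end Part2
/-- For a countable product system and a closed `K`,
`h(T_j, π_j K) ≤ h(S, K) ≤ ∑_{i ∈ ℕ} h(T_i, π_i K)` (the series of nonnegative terms
being the supremum of its partial sums). -/
theorem product_coverEntropy_bounds (X : ℕ → Type*) [∀ i, MetricSpace (X i)]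
    [∀ i, CompactSpace (X i)] (T : ∀ i, X i ≃ₜ X i)
    (K : Set (∀ i, X i)) (hK : IsClosed K) (j : ℕ) :
    coverEntropy (⇑(T j)) ((fun x => x j) '' K) ≤
      coverEntropy (fun (x : ∀ i, X i) (i : ℕ) => T i (x i)) K ∧
      coverEntropy (fun (x : ∀ i, X i) (i : ℕ) => T i (x i)) K ≤
        ⨆ N : ℕ, ∑ i ∈ Finset.range N,
          coverEntropy (⇑(T i)) ((fun x => x i) '' K) := by
  exact ⟨part1 (fun i => ⇑(T i)) K j, part2 (fun i => ⇑(T i)) K⟩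

end Lowering
end
end
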